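/- Let N be a nonnegative integer, η ∈ ℂ, and a = (a₁,a₂,a₃,a₄) ∈ ℂ⁴ with a₁+a₂+a₃+a₄ = 0. Then as operators on Θ_N, σ ∘ Δ(a) ∘ σ = e^{2πi(a₁+a₃+τ/2)} · Δ(a₁+1/2+τ/2, a₂+1/2−τ/2, a₃−1/2+τ/2, a₄−1/2−τ/2). -/

import Mathlib

noncomputable section
open Complex MeasureTheory

def cπ : ℂ := Real.pi

/-- Jacobi's first theta function θ₁(x|τ). -/
def θf (τ x : ℂ) : ℂ :=
  I * ∑' n : ℤ, (-1 : ℂ) ^ n *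
    Complex.exp (cπ * I * τ * ((n : ℂ) - 1/2)^2 + cπ * I * (2*(n : ℂ) - 1) * x)

/-- The space Θ_N of even theta functions of order 2N. -/
def ThetaSp (τ : ℂ) (N : ℕ) (f : ℂ → ℂ) : Prop :=
  Differentiable ℂ f ∧ (∀ x, f (x + 1) = f x) ∧
  (∀ x, f (x + τ) = Complex.exp (-2*cπ*I*N*(2*x + τ)) * f x) ∧
  (∀ x, f (-x) = f x)

/-- Sklyanin's weight function M(u,v). -/
def Mw (τ η : ℂ) (N : ℕ) (u v : ℂ) : ℂ :=
  θf τ (2*u) * θf τ (2*v) /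
    (Complex.exp (2*cπ*I*u*(N+2)) *
      ∏ k ∈ Finset.range (N+2),
        (θf τ (u + v + (2*(k:ℂ) - N - 1)*η + 1/2 + τ/2) *
         θf τ (u - v + (2*(k:ℂ) - N - 1)*η + 1/2 + τ/2)))

/-- Sklyanin's invariant pairing, with τ = t * I. -/
def pairing (τ η : ℂ) (t : ℝ) (N : ℕ) (f g : ℂ → ℂ) : ℂ :=
  ∫ y in (0:ℝ)..t, ∫ x in (0:ℝ)..(1:ℝ),
    f (x + y*I) * (starRingEnd ℂ) (g (x + y*I)) *
      Mw τ η N (x + y*I) ((starRingEnd ℂ) (x + y*I))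

/-- The numerator defining the difference operator Δ(a). -/
def ΔRHS (τ η : ℂ) (N : ℕ) (a₁ a₂ a₃ a₄ : ℂ) (f : ℂ → ℂ) (x : ℂ) : ℂ :=
  θf τ (x + a₁ - N*η/2) * θf τ (x + a₂ - N*η/2) * θf τ (x + a₃ - N*η/2) *
    θf τ (x + a₄ - N*η/2) * f (x + η)
  - θf τ (x - a₁ + N*η/2) * θf τ (x - a₂ + N*η/2) * θf τ (x - a₃ + N*η/2) *
    θf τ (x - a₄ + N*η/2) * f (x - η)

/-- The involution σ on Θ_N. -/
def σop (τ : ℂ) (N : ℕ) (f : ℂ → ℂ) (x : ℂ) : ℂ :=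
  Complex.exp (2*cπ*I*N*(1/4 + τ/4 + x)) * f (x + 1/2 + τ/2)

/-- q-Pochhammer infinite product (a;p)_∞. -/
def qPoch (a p : ℂ) : ℂ := ∏' j : ℕ, (1 - a * p^j)

/-- The constant C of Theorem 3.2. -/
def Cconst (τ η : ℂ) (N : ℕ) : ℂ :=
  2*η * Complex.exp (2*cπ*I*τ*(3/8)) /
    (θf τ (2*(N+1)*η) *
      (qPoch (Complex.exp (2*cπ*I*τ)) (Complex.exp (2*cπ*I*τ)))^3)

/-- The kernel K(u,w). -/
def Kk (τ η : ℂ) (N : ℕ) (u w : ℂ) : ℂ :=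
  Complex.exp (2*cπ*I*u*(N:ℂ)) *
  ∏ k ∈ Finset.range N,
    (θf τ (u + w + (2*(k:ℂ) - N + 1)*η + 1/2 + τ/2) *
     θf τ (u - w + (2*(k:ℂ) - N + 1)*η + 1/2 + τ/2))

/-- The basis functions e_k^N(x;a,b). -/
def ekN (τ η : ℂ) (N k : ℕ) (a b : ℂ) (x : ℂ) : ℂ :=
  (∏ j ∈ Finset.range k, (θf τ (a + x + 2*(j:ℂ)*η) * θf τ (a - x + 2*(j:ℂ)*η))) *
  (∏ j ∈ Finset.range (N - k), (θf τ (b + x + 2*(j:ℂ)*η) * θf τ (b - x + 2*(j:ℂ)*η)))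

/-- Elliptic number [x] = θ(2ηx). -/
def ell (τ η x : ℂ) : ℂ := θf τ (2*η*x)

/-- Elliptic shifted factorial [x]_k. -/
def ellFac (τ η x : ℂ) (k : ℕ) : ℂ := ∏ j ∈ Finset.range k, ell τ η (x + j)


lemma exp_shift (a b : ℂ) (k : ℤ) (h : a = b + k*(2*cπ*I)) :
    Complex.exp a = Complex.exp b := by
  rw [h, Complex.exp_add,
    show Complex.exp ((k:ℂ)*(2*cπ*I)) = 1 from Complex.exp_int_mul_two_pi_mul_I k, mul_one]

lemma exp_shift' (a b : ℂ) (k : ℤ) (h : a = b + cπ*I + k*(2*cπ*I)) :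
    Complex.exp a = -Complex.exp b := by
  rw [h, Complex.exp_add, Complex.exp_add,
    show Complex.exp ((k:ℂ)*(2*cπ*I)) = 1 from Complex.exp_int_mul_two_pi_mul_I k,
    show Complex.exp (cπ*I) = -1 from Complex.exp_pi_mul_I]
  ring

lemma theta_eq (τ x : ℂ) :
    θf τ x = I * (Complex.exp (cπ*I*τ/4 - cπ*I*x) * jacobiTheta₂ (x + 1/2 - τ/2) τ) := by
  rw [θf, jacobiTheta₂, ← tsum_mul_left (f := fun n : ℤ => jacobiTheta₂_term n (x + 1/2 - τ/2) τ)]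
  congr 1
  refine tsum_congr fun n => ?_
  have h1 : ((-1:ℂ))^n = Complex.exp ((n:ℂ)*(cπ*I)) := by
    rw [Complex.exp_int_mul, show Complex.exp (cπ*I) = -1 from Complex.exp_pi_mul_I]
  rw [jacobiTheta₂_term, h1, ← Complex.exp_add, ← Complex.exp_add]
  congr 1
  simp only [cπ]
  ring

lemma theta_add_one (τ x : ℂ) : θf τ (x + 1) = -θf τ x := by
  rw [theta_eq, theta_eq, show x + 1 + 1/2 - τ/2 = (x + 1/2 - τ/2) + 1 by ring,
    jacobiTheta₂_add_left,
    show Complex.exp (cπ*I*τ/4 - cπ*I*(x+1)) = -Complex.exp (cπ*I*τ/4 - cπ*I*x) from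
      exp_shift' _ _ (-1) (by push_cast; ring)]
  ring

lemma theta_add_tau (τ x : ℂ) :
    θf τ (x + τ) = -Complex.exp (-(cπ*I*τ) - 2*cπ*I*x) * θf τ x := by
  rw [theta_eq, theta_eq, show x + τ + 1/2 - τ/2 = (x + 1/2 - τ/2) + τ by ring,
    jacobiTheta₂_add_left']
  have h : Complex.exp (cπ*I*τ/4 - cπ*I*(x+τ)) *
      Complex.exp (-(Real.pi:ℂ)*I*(τ + 2*(x + 1/2 - τ/2))) =
      -(Complex.exp (-(cπ*I*τ) - 2*cπ*I*x) * Complex.exp (cπ*I*τ/4 - cπ*I*x)) := by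
    rw [← Complex.exp_add, ← Complex.exp_add]
    exact exp_shift' _ _ (-1) (by simp only [cπ]; push_cast; ring)
  linear_combination (I * jacobiTheta₂ (x + 1/2 - τ/2) τ) * h

lemma theta_add_one_add_tau (τ y : ℂ) :
    θf τ (y + 1 + τ) = Complex.exp (-(cπ*I*τ) - 2*cπ*I*y) * θf τ y := by
  rw [theta_add_tau, theta_add_one,
    show Complex.exp (-(cπ*I*τ) - 2*cπ*I*(y+1)) = Complex.exp (-(cπ*I*τ) - 2*cπ*I*y) from
      exp_shift _ _ (-1) (by push_cast; ring)]
  ring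

lemma bridge (τ η : ℂ) (N : ℕ) (a₁ a₂ a₃ a₄ : ℂ) (ha : a₁ + a₂ + a₃ + a₄ = 0)
    (f : ℂ → ℂ) (hf1 : ∀ y, f (y + 1) = f y)
    (hfτ : ∀ y, f (y + τ) = Complex.exp (-2*cπ*I*N*(2*y + τ)) * f y) (x : ℂ) :
    ΔRHS τ η N a₁ a₂ a₃ a₄ (σop τ N f) (x + 1/2 + τ/2)
      = Complex.exp (-(2*cπ*I*N*(1/4 + τ/4 + x))) * Complex.exp (-(cπ*I*τ) - 4*cπ*I*x)
        * Complex.exp (2*cπ*I*(a₁ + a₃ + τ/2))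
        * ΔRHS τ η N (a₁ + 1/2 + τ/2) (a₂ + 1/2 - τ/2) (a₃ - 1/2 + τ/2) (a₄ - 1/2 - τ/2) f x := by
  simp only [ΔRHS, σop]
  rw [show x + 1/2 + τ/2 + η + 1/2 + τ/2 = x + η + τ + 1 by ring, hf1,
      show x + η + τ = (x + η) + τ from rfl, hfτ]
  rw [show x + 1/2 + τ/2 - η + 1/2 + τ/2 = x - η + τ + 1 by ring, hf1,
      show x - η + τ = (x - η) + τ from rfl, hfτ]
  rw [show x + 1/2 + τ/2 + a₁ - (N:ℂ)*η/2 = x + (a₁ + 1/2 + τ/2) - (N:ℂ)*η/2 by ring]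
  rw [show x + 1/2 + τ/2 + a₂ - (N:ℂ)*η/2 = (x + (a₂ + 1/2 - τ/2) - (N:ℂ)*η/2) + τ by ring,
      theta_add_tau]
  rw [show x + 1/2 + τ/2 + a₃ - (N:ℂ)*η/2 = (x + (a₃ - 1/2 + τ/2) - (N:ℂ)*η/2) + 1 by ring,
      theta_add_one]
  rw [show x + 1/2 + τ/2 + a₄ - (N:ℂ)*η/2 = (x + (a₄ - 1/2 - τ/2) - (N:ℂ)*η/2) + 1 + τ by ring,
      theta_add_one_add_tau]
  rw [show x + 1/2 + τ/2 - a₁ + (N:ℂ)*η/2 = (x - (a₁ + 1/2 + τ/2) + (N:ℂ)*η/2) + 1 + τ by ring,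
      theta_add_one_add_tau]
  rw [show x + 1/2 + τ/2 - a₂ + (N:ℂ)*η/2 = (x - (a₂ + 1/2 - τ/2) + (N:ℂ)*η/2) + 1 by ring,
      theta_add_one]
  rw [show x + 1/2 + τ/2 - a₃ + (N:ℂ)*η/2 = (x - (a₃ - 1/2 + τ/2) + (N:ℂ)*η/2) + τ by ring,
      theta_add_tau]
  rw [show x + 1/2 + τ/2 - a₄ + (N:ℂ)*η/2 = x - (a₄ - 1/2 - τ/2) + (N:ℂ)*η/2 by ring]
  have hplus : Complex.exp (-(cπ*I*τ) - 2*cπ*I*(x + (a₂ + 1/2 - τ/2) - (N:ℂ)*η/2)) *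
      Complex.exp (-(cπ*I*τ) - 2*cπ*I*(x + (a₄ - 1/2 - τ/2) - (N:ℂ)*η/2)) *
      Complex.exp (2*cπ*I*(N:ℂ)*(1/4 + τ/4 + (x + 1/2 + τ/2 + η))) *
      Complex.exp (-2*cπ*I*(N:ℂ)*(2*(x + η) + τ)) =
      Complex.exp (-(2*cπ*I*(N:ℂ)*(1/4 + τ/4 + x))) * Complex.exp (-(cπ*I*τ) - 4*cπ*I*x) *
      Complex.exp (2*cπ*I*(a₁ + a₃ + τ/2)) := by
    rw [← Complex.exp_add, ← Complex.exp_add, ← Complex.exp_add, ← Complex.exp_add,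
      ← Complex.exp_add]
    exact exp_shift _ _ (N:ℤ) (by push_cast; linear_combination (-(2*(cπ*I)))*ha)
  have hminus : Complex.exp (-(cπ*I*τ) - 2*cπ*I*(x - (a₁ + 1/2 + τ/2) + (N:ℂ)*η/2)) *
      Complex.exp (-(cπ*I*τ) - 2*cπ*I*(x - (a₃ - 1/2 + τ/2) + (N:ℂ)*η/2)) *
      Complex.exp (2*cπ*I*(N:ℂ)*(1/4 + τ/4 + (x + 1/2 + τ/2 - η))) *
      Complex.exp (-2*cπ*I*(N:ℂ)*(2*(x - η) + τ)) =
      Complex.exp (-(2*cπ*I*(N:ℂ)*(1/4 + τ/4 + x))) * Complex.exp (-(cπ*I*τ) - 4*cπ*I*x) *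
      Complex.exp (2*cπ*I*(a₁ + a₃ + τ/2)) := by
    rw [← Complex.exp_add, ← Complex.exp_add, ← Complex.exp_add, ← Complex.exp_add,
      ← Complex.exp_add]
    exact exp_shift _ _ (N:ℤ) (by push_cast; ring)
  linear_combination
    (θf τ (x + (a₁ + 1/2 + τ/2) - (N:ℂ)*η/2) * θf τ (x + (a₂ + 1/2 - τ/2) - (N:ℂ)*η/2) *
      θf τ (x + (a₃ - 1/2 + τ/2) - (N:ℂ)*η/2) * θf τ (x + (a₄ - 1/2 - τ/2) - (N:ℂ)*η/2) *
      f (x + η)) * hplus -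
    (θf τ (x - (a₁ + 1/2 + τ/2) + (N:ℂ)*η/2) * θf τ (x - (a₂ + 1/2 - τ/2) + (N:ℂ)*η/2) *
      θf τ (x - (a₃ - 1/2 + τ/2) + (N:ℂ)*η/2) * θf τ (x - (a₄ - 1/2 - τ/2) + (N:ℂ)*η/2) *
      f (x - η)) * hminus

lemma theta_half_ne (t : ℝ) (ht : 0 < t) (τ : ℂ) (hτ : τ = t*I) : θf τ (1/2 : ℂ) ≠ 0 := by
  have hτim : 0 < τ.im := by rw [hτ]; simpa using ht
  have hS : jacobiTheta₂ (τ/2) τ ≠ 0 := by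
    have hsum := hasSum_jacobiTheta₂_term (τ/2) hτim
    have hterm : ∀ n : ℤ, jacobiTheta₂_term n (τ/2) τ =
        ((Real.exp (-(Real.pi * t * ((n:ℝ)^2 + (n:ℝ)))) : ℝ) : ℂ) := by
      intro n
      rw [jacobiTheta₂_term, Complex.ofReal_exp]
      congr 1
      rw [hτ]
      push_cast
      linear_combination ((Real.pi : ℂ) * (t:ℂ) * ((n:ℂ)^2 + (n:ℂ))) * Complex.I_sq
    simp_rw [hterm] at hsum
    have hre : HasSum (fun n : ℤ => Real.exp (-(Real.pi * t * ((n:ℝ)^2 + (n:ℝ)))))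
        (jacobiTheta₂ (τ/2) τ).re := by
      have := Complex.reCLM.hasSum hsum
      simpa only [Complex.reCLM_apply, Complex.ofReal_re] using this
    have hpos : 0 < (jacobiTheta₂ (τ/2) τ).re := by
      have h := Summable.tsum_pos hre.summable (fun n => (Real.exp_pos _).le) 0 (Real.exp_pos _)
      rwa [hre.tsum_eq] at h
    intro h
    rw [h] at hpos
    simp at hpos
  rw [theta_eq, show (1/2:ℂ) + 1/2 - τ/2 = -(τ/2) + 1 by ring, jacobiTheta₂_add_left,
    jacobiTheta₂_neg_left]
  exact mul_ne_zero Complex.I_ne_zero (mul_ne_zero (Complex.exp_ne_zero _) hS)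


/-- As operators on Θ_N,
σ∘Δ(a)∘σ = e^{2πi(a₁+a₃+τ/2)}·Δ(a₁+1/2+τ/2, a₂+1/2−τ/2, a₃−1/2+τ/2, a₄−1/2−τ/2). -/
theorem sigma_delta_sigma
    (t : ℝ) (ht : 0 < t) (τ : ℂ) (hτ : τ = t * I)
    (N : ℕ) (η : ℂ) (a₁ a₂ a₃ a₄ : ℂ) (ha : a₁ + a₂ + a₃ + a₄ = 0)
    (f : ℂ → ℂ) (hf : ThetaSp τ N f)
    (Df : ℂ → ℂ) (hDf : Differentiable ℂ Df)
    (hDfEq : ∀ x, θf τ (2*x) * Df x = ΔRHS τ η N a₁ a₂ a₃ a₄ (σop τ N f) x)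
    (Db : ℂ → ℂ) (hDb : Differentiable ℂ Db)
    (hDbEq : ∀ x, θf τ (2*x) * Db x =
      ΔRHS τ η N (a₁ + 1/2 + τ/2) (a₂ + 1/2 - τ/2) (a₃ - 1/2 + τ/2)
        (a₄ - 1/2 - τ/2) f x) :
    ∀ x, σop τ N Df x = Complex.exp (2*cπ*I*(a₁ + a₃ + τ/2)) * Db x := by
  have hτim : 0 < τ.im := by rw [hτ]; simpa using ht
  -- Key pointwise identity
  have key : ∀ y : ℂ, θf τ (2*y) *
      (σop τ N Df y - Complex.exp (2*cπ*I*(a₁ + a₃ + τ/2)) * Db y) = 0 := by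
    intro y
    have H1 := hDfEq (y + 1/2 + τ/2)
    rw [show 2*(y + 1/2 + τ/2) = 2*y + 1 + τ by ring, theta_add_one_add_tau,
      bridge τ η N a₁ a₂ a₃ a₄ ha f hf.2.1 hf.2.2.1 y, ← hDbEq y] at H1
    have hE3 : Complex.exp (-(cπ*I*τ) - 4*cπ*I*y) =
        Complex.exp (-(cπ*I*τ) - 2*cπ*I*(2*y)) := by
      rw [show -(cπ*I*τ) - 4*cπ*I*y = -(cπ*I*τ) - 2*cπ*I*(2*y) by ring]
    rw [hE3] at H1
    have hE1 : Complex.exp (-(2*cπ*I*(N:ℂ)*(1/4 + τ/4 + y))) *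
        Complex.exp (2*cπ*I*(N:ℂ)*(1/4 + τ/4 + y)) = 1 := by
      rw [← Complex.exp_add,
        show -(2*cπ*I*(N:ℂ)*(1/4 + τ/4 + y)) + 2*cπ*I*(N:ℂ)*(1/4 + τ/4 + y) = 0 by ring,
        Complex.exp_zero]
    have hE2 : Complex.exp (-(cπ*I*τ) - 2*cπ*I*(2*y)) *
        Complex.exp (cπ*I*τ + 4*cπ*I*y) = 1 := by
      rw [← Complex.exp_add,
        show -(cπ*I*τ) - 2*cπ*I*(2*y) + (cπ*I*τ + 4*cπ*I*y) = 0 by ring,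
        Complex.exp_zero]
    simp only [σop]
    linear_combination
      (Complex.exp (2*cπ*I*(N:ℂ)*(1/4 + τ/4 + y)) * Complex.exp (cπ*I*τ + 4*cπ*I*y)) * H1
      + (θf τ (2*y) * Complex.exp (2*cπ*I*(a₁ + a₃ + τ/2)) * Db y *
          Complex.exp (2*cπ*I*(N:ℂ)*(1/4 + τ/4 + y)) *
          Complex.exp (-(2*cπ*I*(N:ℂ)*(1/4 + τ/4 + y)))
        - θf τ (2*y) * Complex.exp (2*cπ*I*(N:ℂ)*(1/4 + τ/4 + y)) * Df (y + 1/2 + τ/2)) * hE2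
      + (θf τ (2*y) * Complex.exp (2*cπ*I*(a₁ + a₃ + τ/2)) * Db y) * hE1
  -- differentiability of x ↦ θf τ (2x)
  have hFdiff : Differentiable ℂ (fun y : ℂ => θf τ (2*y)) := by
    have heq : (fun y : ℂ => θf τ (2*y)) =
        fun y : ℂ => I * (Complex.exp (cπ*I*τ/4 - cπ*I*(2*y)) *
          jacobiTheta₂ (2*y + 1/2 - τ/2) τ) := funext fun y => theta_eq τ (2*y)
    rw [heq]
    have h2 : Differentiable ℂ (fun y : ℂ => 2*y + 1/2 - τ/2) := by fun_prop
    have hJ : Differentiable ℂ (fun y : ℂ => jacobiTheta₂ (2*y + 1/2 - τ/2) τ) :=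
      fun z => (differentiableAt_jacobiTheta₂_fst (2*z + 1/2 - τ/2) hτim).comp (f := fun y : ℂ => 2*y + 1/2 - τ/2) z (h2 z)
    have hexp : Differentiable ℂ (fun y : ℂ => Complex.exp (cπ*I*τ/4 - cπ*I*(2*y))) :=
      Complex.differentiable_exp.comp (by fun_prop)
    exact (differentiable_const I).mul (hexp.mul hJ)
  -- density of the nonvanishing set
  have hne : θf τ (2*((1/4:ℂ))) ≠ 0 := by
    rw [show (2:ℂ)*((1/4:ℂ)) = 1/2 by norm_num]
    exact theta_half_ne t ht τ hτ
  have hdense : Dense {y : ℂ | θf τ (2*y) ≠ 0} := by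
    refine dense_iff_inter_open.mpr ?_
    rintro U hU ⟨z, hz⟩
    by_contra hcon
    rw [Set.not_nonempty_iff_eq_empty] at hcon
    have hzero : ∀ y ∈ U, θf τ (2*y) = 0 := by
      intro y hy
      by_contra h
      exact Set.eq_empty_iff_forall_notMem.mp hcon y ⟨hy, h⟩
    have hev : (fun y : ℂ => θf τ (2*y)) =ᶠ[nhds z] 0 :=
      Filter.eventuallyEq_of_mem (hU.mem_nhds hz) hzero
    have hAnal : AnalyticOnNhd ℂ (fun y : ℂ => θf τ (2*y)) Set.univ :=
      analyticOnNhd_univ_iff_differentiable.mpr hFdiff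
    have := hAnal.eqOn_zero_of_preconnected_of_eventuallyEq_zero isPreconnected_univ
      (Set.mem_univ z) hev
    exact hne (this (Set.mem_univ ((1/4:ℂ))))
  -- continuity of the difference function
  have hgc : Continuous (fun y : ℂ =>
      σop τ N Df y - Complex.exp (2*cπ*I*(a₁ + a₃ + τ/2)) * Db y) := by
    have hcDf := hDf.continuous
    have hcDb := hDb.continuous
    simp only [σop]
    fun_prop
  have hfinal : (fun y : ℂ =>
      σop τ N Df y - Complex.exp (2*cπ*I*(a₁ + a₃ + τ/2)) * Db y) = fun _ => (0:ℂ) := by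
    refine Continuous.ext_on hdense hgc continuous_const ?_
    intro y hy
    exact (mul_eq_zero.mp (key y)).resolve_left hy
  intro x
  have := congrFun hfinal x
  exact sub_eq_zero.mp this
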